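/- Let x_{i−1} < x_i < x_{i+1} be real numbers. Define the auxiliary functions Ñ_{i−1}^1 = LB(·; x_{i−1}, x_i, 0, 1) and Ñ_i^0 = LB(·; x_i, x_{i+1}, 1, 0), and the assembled shape function N_i = Ñ_i^0 + Ñ_{i−1}^1 − 1. Then N_i(x) = 0 for all x ≤ x_{i−1}, N_i(x) = (x − x_{i−1})/(x_i − x_{i−1}) for x_{i−1} ≤ x ≤ x_i, N_i(x) = (x_{i+1} − x)/(x_{i+1} − x_i) for x_i ≤ x ≤ x_{i+1}, and N_i(x) = 0 for all x ≥ x_{i+1}. In particular N_i(x_i) = 1 and the assembly eliminates the non-zero tails of the auxiliary functions. -/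

import Mathlib

/-- ReLU activation: ReLU(t) = max(t, 0). -/
noncomputable def relu (t : ℝ) : ℝ := max t 0

/-- The Linear Block: LB(x; x_a, x_b, y_a, y_b)
    = (y_b − y_a)·ReLU(−ReLU(−x + x_b)/(x_b − x_a) + 1) + y_a. -/
noncomputable def linearBlock (xa xb ya yb x : ℝ) : ℝ :=
  (yb - ya) * relu (-(relu (-x + xb)) / (xb - xa) + 1) + ya

lemma lb_left (xa xb ya yb x : ℝ) (h : xa < xb) (hx : x ≤ xa) :
    linearBlock xa xb ya yb x = ya := by
  have hd : (0:ℝ) < xb - xa := by linarith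
  have h1 : relu (-x + xb) = -x + xb := by
    simp [relu, max_eq_left]; linarith
  rw [linearBlock, h1]
  have h2 : -(-x + xb) / (xb - xa) + 1 ≤ 0 := by
    rw [div_add' _ _ _ (ne_of_gt hd)]
    apply div_nonpos_of_nonpos_of_nonneg <;> linarith
  rw [show relu (-(-x + xb) / (xb - xa) + 1) = 0 from max_eq_right h2]
  ring

lemma lb_mid (xa xb ya yb x : ℝ) (h : xa < xb) (hx1 : xa ≤ x) (hx2 : x ≤ xb) :
    linearBlock xa xb ya yb x = (yb - ya) * ((x - xa) / (xb - xa)) + ya := by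
  have hd : (0:ℝ) < xb - xa := by linarith
  have h1 : relu (-x + xb) = -x + xb := by
    simp [relu, max_eq_left]; linarith
  rw [linearBlock, h1]
  have he : -(-x + xb) / (xb - xa) + 1 = (x - xa) / (xb - xa) := by
    field_simp; ring
  rw [he, show relu ((x - xa) / (xb - xa)) = (x - xa) / (xb - xa) from
    max_eq_left (div_nonneg (by linarith) (by linarith))]

lemma lb_right (xa xb ya yb x : ℝ) (h : xa < xb) (hx : xb ≤ x) :
    linearBlock xa xb ya yb x = yb := by
  have h1 : relu (-x + xb) = 0 := max_eq_right (by linarith)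
  rw [linearBlock, h1]
  norm_num [relu]

theorem stmt1 (xim1 xi xip1 : ℝ) (h1 : xim1 < xi) (h2 : xi < xip1)
    -- auxiliary functions Ñ_{i−1}^1 and Ñ_i^0, and the assembled shape function N_i
    (Naux1 Naux0 Ni : ℝ → ℝ)
    (hNaux1 : Naux1 = fun x => linearBlock xim1 xi 0 1 x)
    (hNaux0 : Naux0 = fun x => linearBlock xi xip1 1 0 x)
    (hNi : Ni = fun x => Naux0 x + Naux1 x - 1) :
    (∀ x : ℝ, x ≤ xim1 → Ni x = 0) ∧
    (∀ x : ℝ, xim1 ≤ x → x ≤ xi → Ni x = (x - xim1) / (xi - xim1)) ∧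
    (∀ x : ℝ, xi ≤ x → x ≤ xip1 → Ni x = (xip1 - x) / (xip1 - xi)) ∧
    (∀ x : ℝ, xip1 ≤ x → Ni x = 0) ∧
    Ni xi = 1 := by
  subst hNaux1 hNaux0 hNi
  refine ⟨?_, ?_, ?_, ?_, ?_⟩
  · intro x hx
    simp only
    rw [lb_left _ _ _ _ _ h1 hx, lb_left _ _ _ _ _ h2 (by linarith)]
    ring
  · intro x hx1 hx2
    simp only
    rw [lb_mid _ _ _ _ _ h1 hx1 hx2, lb_left _ _ _ _ _ h2 hx2]
    ring
  · intro x hx1 hx2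
    simp only
    rw [lb_right _ _ _ _ _ h1 hx1, lb_mid _ _ _ _ _ h2 hx1 hx2]
    have hd : (0:ℝ) < xip1 - xi := by linarith
    field_simp
    ring
  · intro x hx
    simp only
    rw [lb_right _ _ _ _ _ h1 (by linarith), lb_right _ _ _ _ _ h2 hx]
    ring
  · simp only
    rw [lb_right _ _ _ _ _ h1 le_rfl, lb_mid _ _ _ _ _ h2 le_rfl h2.le]
    field_simp
    ring
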